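/- Let A be a commutative ring and let q ≥ 1. For each i = 1,…,q, let M_i be a saturated subset of ℕ^{r_i} (r_i ≥ 1), let φ_{i1},…,φ_{i r_i} be elements of A, and let I_i = 𝒤(M_i) be the ideal generated by {φ_{i1}^{b₁}⋯φ_{i r_i}^{b_{r_i}} : b ∈ M_i}. Let N be a saturated subset of ℕ^q. Then 𝒥(N) = 𝒤(M(N)), where 𝒥(N) = Σ_{b ∈ N} I₁^{b₁}⋯I_q^{b_q}, M(N) = ⋃_{c ∈ N} c₁M₁ × ⋯ × c_qM_q ⊆ ℕ^{r₁+⋯+r_q}, and 𝒤(M(N)) is the ideal generated by the monomials φ_{11}^{a_{11}}⋯φ_{q r_q}^{a_{q r_q}} for exponent vectors a ∈ M(N). -/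
import Mathlib


/-- A subset `N` of `ℕ^ι` is *saturated* if it is nonempty and
`a + ℕ^ι ⊆ N` for every `a ∈ N`. -/
def Saturated {ι : Type*} (N : Set (ι → ℕ)) : Prop :=
  N.Nonempty ∧ ∀ a ∈ N, ∀ c : ι → ℕ, a + c ∈ N

/-- `𝒤(M)`: the ideal of `A` generated by the monomials
`ψ₁^{a₁} ⋯ ψ_r^{a_r}` for `a ∈ M`. -/
def monIdeal {A : Type*} [CommRing A] {ι : Type*} [Fintype ι]
    (ψ : ι → A) (M : Set (ι → ℕ)) : Ideal A :=
  Ideal.span {x : A | ∃ b ∈ M, x = ∏ i, ψ i ^ b i}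

/-- `cM`: equal to `ℕ^ι` when `c = 0`, and to the `c`-fold Minkowski sum
of `M` with itself when `c > 0`. -/
def minkSum {ι : Type*} (c : ℕ) (M : Set (ι → ℕ)) : Set (ι → ℕ) :=
  if c = 0 then Set.univ
  else {b | ∃ f : Fin c → (ι → ℕ), (∀ i, f i ∈ M) ∧ b = ∑ i, f i}

/-- `M(N) = ⋃_{c ∈ N} c₁M₁ × ⋯ × c_qM_q ⊆ ℕ^{r₁+⋯+r_q}`. -/
def MsetOf {q : ℕ} {r : Fin q → ℕ} (M : ∀ i, Set (Fin (r i) → ℕ))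
    (N : Set (Fin q → ℕ)) : Set (((i : Fin q) × Fin (r i)) → ℕ) :=
  {a | ∃ c ∈ N, ∀ i : Fin q, (fun j => a ⟨i, j⟩) ∈ minkSum (c i) (M i)}

/-- `𝒥(N) = Σ_{b ∈ N} I₁^{b₁} ⋯ I_q^{b_q}`. -/
def Jideal {A : Type*} [CommRing A] {q : ℕ} (I : Fin q → Ideal A)
    (N : Set (Fin q → ℕ)) : Ideal A :=
  ⨆ b ∈ N, ∏ i, I i ^ b i

lemma monIdeal_pow {A : Type*} [CommRing A] {ι : Type*} [Fintype ι]
    (ψ : ι → A) (M : Set (ι → ℕ)) (c : ℕ) :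
    monIdeal ψ M ^ c = monIdeal ψ (minkSum c M) := by
  rcases Nat.eq_zero_or_pos c with rfl | hc
  · simp only [pow_zero, minkSum, if_pos rfl]
    symm
    rw [Ideal.one_eq_top, Ideal.eq_top_iff_one]
    exact Ideal.subset_span ⟨fun _ => 0, Set.mem_univ _, by simp⟩
  · have h1 : monIdeal ψ M ^ c = ∏ _i : Fin c, monIdeal ψ M := by
      rw [Finset.prod_const, Finset.card_univ, Fintype.card_fin]
    rw [h1, monIdeal, Ideal.prod_span, monIdeal]
    congr 1
    ext x
    rw [Set.mem_fintype_prod]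
    constructor
    · rintro ⟨g, hg, rfl⟩
      choose b hb hgb using hg
      refine ⟨∑ i, b i, ?_, ?_⟩
      · rw [minkSum, if_neg hc.ne']
        exact ⟨b, hb, rfl⟩
      · calc ∏ i, g i = ∏ i, ∏ j, ψ j ^ b i j := by simp_rw [hgb]
          _ = ∏ j, ∏ i, ψ j ^ b i j := Finset.prod_comm
          _ = ∏ j, ψ j ^ ∑ i, b i j := by
              simp_rw [Finset.prod_pow_eq_pow_sum]
          _ = ∏ j, ψ j ^ (∑ i, b i) j := by simp [Finset.sum_apply]
    · rintro ⟨b, hb, rfl⟩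
      rw [minkSum, if_neg hc.ne'] at hb
      obtain ⟨f, hf, rfl⟩ := hb
      refine ⟨fun i => ∏ j, ψ j ^ f i j, fun i => ⟨f i, hf i, rfl⟩, ?_⟩
      calc ∏ i, ∏ j, ψ j ^ f i j = ∏ j, ∏ i, ψ j ^ f i j := Finset.prod_comm
        _ = ∏ j, ψ j ^ ∑ i, f i j := by simp_rw [Finset.prod_pow_eq_pow_sum]
        _ = ∏ j, ψ j ^ (∑ i, f i) j := by simp [Finset.sum_apply]

lemma prod_monIdeal {A : Type*} [CommRing A] {q : ℕ} {r : Fin q → ℕ}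
    (φ : ∀ i, Fin (r i) → A) (S : ∀ i, Set (Fin (r i) → ℕ)) :
    (∏ i, monIdeal (φ i) (S i))
      = monIdeal (fun p : (i : Fin q) × Fin (r i) => φ p.1 p.2)
          {a | ∀ i, (fun j => a ⟨i, j⟩) ∈ S i} := by
  simp only [monIdeal]
  rw [Ideal.prod_span]
  congr 1
  ext x
  rw [Set.mem_fintype_prod]
  constructor
  · rintro ⟨g, hg, rfl⟩
    choose b hb hgb using hg
    refine ⟨fun p => b p.1 p.2, fun i => hb i, ?_⟩
    rw [← Finset.univ_sigma_univ, Finset.prod_sigma]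
    exact Finset.prod_congr rfl (fun i _ => hgb i)
  · rintro ⟨a, ha, rfl⟩
    refine ⟨fun i => ∏ j, φ i j ^ a ⟨i, j⟩, fun i => ⟨fun j => a ⟨i, j⟩, ha i, rfl⟩, ?_⟩
    rw [← Finset.univ_sigma_univ, Finset.prod_sigma]

/-- Lemma 2.8: if `I_i = 𝒤(M_i)` (relative to `φ_{i1}, …, φ_{i r_i}`) for
saturated `M_i ⊆ ℕ^{r_i}`, and `N ⊆ ℕ^q` is saturated, then
`𝒥(N) = 𝒤(M(N))`, the latter taken with respect to the concatenated
sequence of all the `φ_{ij}`. -/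
theorem Jideal_eq_monIdeal_MsetOf {A : Type*} [CommRing A]
    {q : ℕ} (hq : 1 ≤ q) {r : Fin q → ℕ} (hr : ∀ i, 1 ≤ r i)
    (M : ∀ i, Set (Fin (r i) → ℕ)) (hM : ∀ i, Saturated (M i))
    (φ : ∀ i, Fin (r i) → A) (I : Fin q → Ideal A)
    (hI : ∀ i, I i = monIdeal (φ i) (M i))
    (N : Set (Fin q → ℕ)) (hN : Saturated N) :
    Jideal I N
      = monIdeal (fun p : (i : Fin q) × Fin (r i) => φ p.1 p.2) (MsetOf M N) := by

  have key : ∀ b : Fin q → ℕ, (∏ i, I i ^ b i)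
      = monIdeal (fun p : (i : Fin q) × Fin (r i) => φ p.1 p.2)
          {a | ∀ i, (fun j => a ⟨i, j⟩) ∈ minkSum (b i) (M i)} := by
    intro b
    simp_rw [hI, monIdeal_pow]
    exact prod_monIdeal φ _
  rw [Jideal]
  simp_rw [key, monIdeal]
  have hspan : ∀ s : Set A, Ideal.span s = Submodule.span A s := fun _ => rfl
  simp_rw [hspan]
  rw [← Submodule.span_iUnion₂]
  congr 1
  ext x
  simp only [Set.mem_iUnion, Set.mem_setOf_eq, MsetOf]
  constructor
  · rintro ⟨b, hb, a, ha, rfl⟩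
    exact ⟨a, ⟨b, hb, ha⟩, rfl⟩
  · rintro ⟨a, ⟨c, hc, hac⟩, rfl⟩
    exact ⟨c, hc, a, hac, rfl⟩
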